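/- arXiv:2011.07626 — 2 statements merged into one kernel-verified Lean document; each statement's English description precedes it below -/
import Mathlib

section
/- Let M be a symmetric matrix partitioned so that V(x,λ) = (xᵀ, λᵀ, 1) M (xᵀ, λᵀ, 1)ᵀ, and let S₁, T₁ be as in the LMI relaxation. If T₁ - S₁ᵀ W₁ S₁ - ½(S₃ + S₃ᵀ) ⪰ 0 for some entrywise-nonnegative W₁ and S₃ encoding a diagonal multiplier on complementarity, then V(x,λ) ≥ α₁‖x‖² for every (x,λ) satisfying 0 ≤ λ ⊥ Ex + Fλ + c ≥ 0. -/
noncomputable section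

/-- The PWQ Lyapunov candidate `V(x,λ) = xᵀPx + 2xᵀQλ + λᵀRλ + 2h₁ᵀx + 2h₂ᵀλ + h₃`. -/
def Vfun {n m : ℕ} (P : Matrix (Fin n) (Fin n) ℝ) (Q : Matrix (Fin n) (Fin m) ℝ)
    (R : Matrix (Fin m) (Fin m) ℝ) (h₁ : Fin n → ℝ) (h₂ : Fin m → ℝ) (h₃ : ℝ)
    (x : Fin n → ℝ) (l : Fin m → ℝ) : ℝ :=
  dotProduct x (P.mulVec x) + 2 * dotProduct x (Q.mulVec l) +
    dotProduct l (R.mulVec l) + 2 * dotProduct h₁ x +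
    2 * dotProduct h₂ l + h₃

/-- The matrix `T₁`: the Lyapunov matrix `M` with `P` replaced by `P - α₁ I`. -/
def T1Mat {n m : ℕ} (α₁ : ℝ) (P : Matrix (Fin n) (Fin n) ℝ) (Q : Matrix (Fin n) (Fin m) ℝ)
    (R : Matrix (Fin m) (Fin m) ℝ) (h₁ : Fin n → ℝ) (h₂ : Fin m → ℝ) (h₃ : ℝ) :
    Matrix (Fin n ⊕ Fin m ⊕ Unit) (Fin n ⊕ Fin m ⊕ Unit) ℝ :=
  fun a b =>
    match a, b with
    | .inl i, .inl j => P i j - α₁ * (if i = j then 1 else 0)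
    | .inl i, .inr (.inl j) => Q i j
    | .inl i, .inr (.inr _) => h₁ i
    | .inr (.inl i), .inl j => Q j i
    | .inr (.inl i), .inr (.inl j) => R i j
    | .inr (.inl i), .inr (.inr _) => h₂ i
    | .inr (.inr _), .inl j => h₁ j
    | .inr (.inr _), .inr (.inl j) => h₂ j
    | .inr (.inr _), .inr (.inr _) => h₃

/-- The matrix `S₁` mapping `(x, λ, 1)` to `(y, λ, 1)` where `y = Ex + Fλ + c`. -/
def S1Mat {n m : ℕ} (E : Matrix (Fin m) (Fin n) ℝ) (F : Matrix (Fin m) (Fin m) ℝ)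
    (c : Fin m → ℝ) :
    Matrix (Fin m ⊕ Fin m ⊕ Unit) (Fin n ⊕ Fin m ⊕ Unit) ℝ :=
  fun a b =>
    match a, b with
    | .inl i, .inl j => E i j
    | .inl i, .inr (.inl j) => F i j
    | .inl i, .inr (.inr _) => c i
    | .inr (.inl i), .inr (.inl j) => if i = j then (1 : ℝ) else 0
    | .inr (.inr _), .inr (.inr _) => 1
    | _, _ => 0

/-- The matrix `S₃` encoding the diagonal multiplier `2λᵀ diag(τ) y` on complementarity. -/
def S3Mat {n m : ℕ} (τ : Fin m → ℝ) (E : Matrix (Fin m) (Fin n) ℝ)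
    (F : Matrix (Fin m) (Fin m) ℝ) (c : Fin m → ℝ) :
    Matrix (Fin n ⊕ Fin m ⊕ Unit) (Fin n ⊕ Fin m ⊕ Unit) ℝ :=
  fun a b =>
    match a, b with
    | .inr (.inl i), .inl j => τ i * E i j
    | .inr (.inl i), .inr (.inl j) => τ i * F i j
    | .inr (.inl i), .inr (.inr _) => τ i * c i
    | _, _ => 0

theorem stmt_15 (n m : ℕ)
    (P : Matrix (Fin n) (Fin n) ℝ) (Q : Matrix (Fin n) (Fin m) ℝ)
    (R : Matrix (Fin m) (Fin m) ℝ) (h₁ : Fin n → ℝ) (h₂ : Fin m → ℝ) (h₃ : ℝ)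
    (hPsymm : P.IsSymm) (hRsymm : R.IsSymm)
    (E : Matrix (Fin m) (Fin n) ℝ) (F : Matrix (Fin m) (Fin m) ℝ) (c : Fin m → ℝ)
    (α₁ : ℝ)
    (W₁ : Matrix (Fin m ⊕ Fin m ⊕ Unit) (Fin m ⊕ Fin m ⊕ Unit) ℝ)
    (hW₁ : ∀ a b, 0 ≤ W₁ a b) (τ : Fin m → ℝ)
    (hLMI : ∀ v : Fin n ⊕ Fin m ⊕ Unit → ℝ,
      0 ≤ dotProduct v
        ((T1Mat α₁ P Q R h₁ h₂ h₃ - (S1Mat E F c).transpose * W₁ * S1Mat E F c -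
          (1 / 2 : ℝ) • (S3Mat τ E F c + (S3Mat τ E F c).transpose)).mulVec v)) :
    ∀ (x : Fin n → ℝ) (l : Fin m → ℝ),
      (∀ i, 0 ≤ l i) →
      (∀ i, 0 ≤ E.mulVec x i + F.mulVec l i + c i) →
      (∑ i, l i * (E.mulVec x i + F.mulVec l i + c i) = 0) →
      α₁ * ∑ i, (x i) ^ 2 ≤ Vfun P Q R h₁ h₂ h₃ x l := by
  intro x l hl hy hcomp
  set y : Fin m → ℝ := fun i => E.mulVec x i + F.mulVec l i + c i with hy_def
  have hly : ∀ i, l i * y i = 0 := by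
    intro i
    have hterm : ∀ j ∈ Finset.univ, 0 ≤ l j * (E.mulVec x j + F.mulVec l j + c j) :=
      fun j _ => mul_nonneg (hl j) (hy j)
    have := (Finset.sum_eq_zero_iff_of_nonneg hterm).mp hcomp i (Finset.mem_univ i)
    simpa [hy_def] using this
  set e : Fin n ⊕ Fin m ⊕ Unit → ℝ := Sum.elim x (Sum.elim l (fun _ => 1)) with he
  have key := hLMI e
  -- compute the T1 quadratic form
  have hA : dotProduct e ((T1Mat α₁ P Q R h₁ h₂ h₃).mulVec e)
      = Vfun P Q R h₁ h₂ h₃ x l - α₁ * ∑ i, (x i) ^ 2 := by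
    simp only [dotProduct, Matrix.mulVec, T1Mat, Vfun, he,
      Fintype.sum_sum_type, Sum.elim_inl, Sum.elim_inr, Finset.univ_unique,
      Finset.sum_singleton, PUnit.default_eq_unit]
    have h1 : ∀ i, ∑ j, (P i j - α₁ * (if i = j then (1:ℝ) else 0)) * x j
        = (∑ j, P i j * x j) - α₁ * x i := by
      intro i
      rw [Finset.sum_congr rfl (fun j _ => sub_mul (P i j) _ (x j)),
        Finset.sum_sub_distrib]
      congr 1
      simp [mul_ite, ite_mul]
    simp only [h1]
    have hswap : (∑ i : Fin m, l i * ∑ j : Fin n, Q j i * x j)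
        = ∑ j : Fin n, x j * ∑ i : Fin m, Q j i * l i := by
      simp_rw [Finset.mul_sum]
      rw [Finset.sum_comm]
      exact Finset.sum_congr rfl fun j _ => Finset.sum_congr rfl fun i _ => by ring
    have hα : (∑ i : Fin n, x i * (α₁ * x i)) = α₁ * ∑ i : Fin n, (x i) ^ 2 := by
      rw [Finset.mul_sum]
      exact Finset.sum_congr rfl fun i _ => by ring
    simp only [mul_add, mul_sub, mul_one, one_mul, Finset.sum_add_distrib,
      Finset.sum_sub_distrib]
    rw [hswap, hα]
    have hh1 : (∑ i : Fin n, x i * h₁ i) = ∑ i : Fin n, h₁ i * x i :=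
      Finset.sum_congr rfl fun i _ => mul_comm _ _
    have hh2 : (∑ i : Fin m, l i * h₂ i) = ∑ i : Fin m, h₂ i * l i :=
      Finset.sum_congr rfl fun i _ => mul_comm _ _
    rw [hh1, hh2]
    ring
  have hB : dotProduct e (((S1Mat E F c).transpose * W₁ * S1Mat E F c).mulVec e)
      = dotProduct ((S1Mat E F c).mulVec e)
          (W₁.mulVec ((S1Mat E F c).mulVec e)) := by
    rw [← Matrix.mulVec_mulVec, ← Matrix.mulVec_mulVec, Matrix.dotProduct_mulVec,
      Matrix.vecMul_transpose]
  set z := (S1Mat E F c).mulVec e with hz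
  have hznn : ∀ a, 0 ≤ z a := by
    intro a
    rcases a with i | i | u
    · have : z (Sum.inl i) = E.mulVec x i + F.mulVec l i + c i := by
        simp [hz, Matrix.mulVec, dotProduct, S1Mat, he, Fintype.sum_sum_type,
          Finset.univ_unique, Finset.sum_singleton, add_assoc]
      rw [this]; exact hy i
    · have : z (Sum.inr (Sum.inl i)) = l i := by
        simp [hz, Matrix.mulVec, dotProduct, S1Mat, he, Fintype.sum_sum_type,
          Finset.univ_unique, Finset.sum_singleton]
      rw [this]; exact hl i
    · have : z (Sum.inr (Sum.inr u)) = 1 := by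
        simp [hz, Matrix.mulVec, dotProduct, S1Mat, he, Fintype.sum_sum_type,
          Finset.univ_unique, Finset.sum_singleton]
      rw [this]; norm_num
  have hBnn : 0 ≤ dotProduct z (W₁.mulVec z) := by
    apply Finset.sum_nonneg
    intro a _
    refine mul_nonneg (hznn a) ?_
    show (0:ℝ) ≤ ∑ b, W₁ a b * z b
    exact Finset.sum_nonneg fun b _ => mul_nonneg (hW₁ a b) (hznn b)
  have hC : dotProduct e ((S3Mat τ E F c).mulVec e) = 0 := by
    simp only [dotProduct, Matrix.mulVec, S3Mat, he, Fintype.sum_sum_type,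
      Sum.elim_inl, Sum.elim_inr, Finset.univ_unique, Finset.sum_singleton,
      PUnit.default_eq_unit]
    simp only [zero_mul, mul_zero, Finset.sum_const_zero, add_zero, zero_add, mul_one]
    apply Finset.sum_eq_zero
    intro i _
    have h0 := hly i
    have hyv : y i = (∑ j, E i j * x j) + ((∑ j, F i j * l j) + c i) := by
      simp [hy_def, Matrix.mulVec, dotProduct, add_assoc]
    have : (∑ j, τ i * E i j * x j) + ((∑ j, τ i * F i j * l j) + τ i * c i)
        = τ i * y i := by
      rw [hyv]
      simp [Finset.mul_sum, mul_add, mul_assoc]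
    rw [this]
    calc l i * (τ i * y i) = τ i * (l i * y i) := by ring
      _ = 0 := by rw [h0, mul_zero]
  have hCt : dotProduct e ((S3Mat τ E F c).transpose.mulVec e) = 0 := by
    rw [Matrix.dotProduct_mulVec, Matrix.vecMul_transpose, dotProduct_comm]
    exact hC
  simp only [Matrix.sub_mulVec, Matrix.add_mulVec, Matrix.smul_mulVec,
    dotProduct_sub, dotProduct_add, dotProduct_smul,
    smul_eq_mul] at key
  rw [hA, hB, hC, hCt] at key
  linarith [hBnn]

end
end

section
/- Let φ(x) = h_L ∘ ReLU ∘ h_{L-1} ∘ ⋯ ∘ ReLU ∘ h₀ (x) with affine layers h_i(x) = θ_i x + c_i. Define the stacked variables λ = (λ₀,…,λ_{L-1}) and the block lower-triangular F̄ with identity diagonal blocks and sub-diagonal blocks -θ_i. Then the system ȳ = Ēx + F̄λ + c̄, 0 ≤ λ ⊥ ȳ ≥ 0 (with Ē = (-θ₀ᵀ, 0,…,0)ᵀ, c̄ = (-c₀,…,-c_{L-1})) has a unique solution λ(x), its blocks satisfy λ_i(x) = ReLU(h_i(λ_{i-1}(x))) recursively with λ₀(x) = ReLU(h₀(x)), and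 φ(x) = θ_L λ_{L-1}(x) + c_L. -/
/-- The input to layer `i`: the network input `x` for `i = 0`, otherwise
the previous block of complementarity variables. -/
def prevVec (dims : ℕ → ℕ) (x : Fin (dims 0) → ℝ)
    (lam : ∀ i : ℕ, Fin (dims (i + 1)) → ℝ) : (i : ℕ) → Fin (dims i) → ℝ
  | 0 => x
  | (i + 1) => lam i

/-- The hidden-layer activations of the ReLU network:
`z₀ = ReLU(θ₀ x + c₀)`, `z_{i+1} = ReLU(θ_{i+1} z_i + c_{i+1})`. -/
def zvec (dims : ℕ → ℕ) (θ : ∀ i : ℕ, Matrix (Fin (dims (i + 1))) (Fin (dims i)) ℝ)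
    (c : ∀ i : ℕ, Fin (dims (i + 1)) → ℝ) (x : Fin (dims 0) → ℝ) :
    (i : ℕ) → Fin (dims (i + 1)) → ℝ
  | 0 => fun j => max 0 ((θ 0).mulVec x j + c 0 j)
  | (i + 1) => fun j => max 0 ((θ (i + 1)).mulVec (zvec dims θ c x i) j + c (i + 1) j)

/-- The block complementarity condition for block `i`:
`0 ≤ λᵢ ⊥ (-θᵢ·(input of layer i) - cᵢ + λᵢ) ≥ 0`.  Stacked over all blocks this is
exactly `0 ≤ λ ⊥ Ēx + F̄λ + c̄ ≥ 0` with `F̄` block lower triangular with identity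
diagonal blocks and sub-diagonal blocks `-θᵢ`, `Ē = (-θ₀ᵀ,0,…,0)ᵀ`, `c̄ = (-c₀,…,-c_{L-1})`. -/
def LCPBlockCond (dims : ℕ → ℕ) (θ : ∀ i : ℕ, Matrix (Fin (dims (i + 1))) (Fin (dims i)) ℝ)
    (c : ∀ i : ℕ, Fin (dims (i + 1)) → ℝ) (x : Fin (dims 0) → ℝ)
    (lam : ∀ i : ℕ, Fin (dims (i + 1)) → ℝ) (i : ℕ) : Prop :=
  (∀ j, 0 ≤ lam i j) ∧
  (∀ j, 0 ≤ -((θ i).mulVec (prevVec dims x lam i) j + c i j) + lam i j) ∧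
  (∑ j, lam i j * (-((θ i).mulVec (prevVec dims x lam i) j + c i j) + lam i j) = 0)

/-- Scalar complementarity forces the ReLU value. -/
lemma scalar_lcp (a v : ℝ) (h0 : 0 ≤ a) (h1 : 0 ≤ -v + a) (h2 : a * (-v + a) = 0) :
    a = max 0 v := by
  rcases mul_eq_zero.mp h2 with h | h
  · subst h
    have : v ≤ 0 := by linarith
    simp [max_eq_left this]
  · have : a = v := by linarith
    subst this
    exact (max_eq_right h0).symm

/-- `zvec` is the ReLU of the affine image of its layer input. -/
lemma zvec_eq (dims : ℕ → ℕ) (θ : ∀ i : ℕ, Matrix (Fin (dims (i + 1))) (Fin (dims i)) ℝ)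
    (c : ∀ i : ℕ, Fin (dims (i + 1)) → ℝ) (x : Fin (dims 0) → ℝ) (i : ℕ) (j : Fin (dims (i+1))) :
    zvec dims θ c x i j
      = max 0 ((θ i).mulVec (prevVec dims x (zvec dims θ c x) i) j + c i j) := by
  cases i <;> rfl

theorem stmt_17 (L : ℕ) (hL : 0 < L) (dims : ℕ → ℕ)
    (θ : ∀ i : ℕ, Matrix (Fin (dims (i + 1))) (Fin (dims i)) ℝ)
    (c : ∀ i : ℕ, Fin (dims (i + 1)) → ℝ) (x : Fin (dims 0) → ℝ) :
    -- existence: the ReLU recursion solves the stacked LCP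
    (∀ i < L, LCPBlockCond dims θ c x (zvec dims θ c x) i) ∧
    -- uniqueness: any solution of the stacked LCP equals the ReLU recursion blockwise
    (∀ lam : ∀ i : ℕ, Fin (dims (i + 1)) → ℝ,
      (∀ i < L, LCPBlockCond dims θ c x lam i) → ∀ i < L, lam i = zvec dims θ c x i) ∧
    -- the network output `φ(x) = θ_L λ_{L-1} + c_L` computed from any LCP solution
    -- agrees with the ReLU network `h_L ∘ ReLU ∘ h_{L-1} ∘ ⋯ ∘ ReLU ∘ h₀`
    (∀ lam : ∀ i : ℕ, Fin (dims (i + 1)) → ℝ,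
      (∀ i < L, LCPBlockCond dims θ c x lam i) →
      (fun j => (θ L).mulVec (prevVec dims x lam L) j + c L j) =
        fun j => (θ L).mulVec (prevVec dims x (zvec dims θ c x) L) j + c L j) := by
  have huniq : ∀ lam : ∀ i : ℕ, Fin (dims (i + 1)) → ℝ,
      (∀ i < L, LCPBlockCond dims θ c x lam i) → ∀ i < L, lam i = zvec dims θ c x i := by
    intro lam hlam i
    induction i using Nat.strong_induction_on with
    | _ i IH =>
      intro hiL
      have hprev : prevVec dims x lam i = prevVec dims x (zvec dims θ c x) i := by
        cases i with
        | zero => rfl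
        | succ k => exact IH k (Nat.lt_succ_self k) (Nat.lt_of_succ_lt hiL)
      obtain ⟨h0, h1, h2⟩ := hlam i hiL
      have hterm : ∀ j, lam i j * (-((θ i).mulVec (prevVec dims x lam i) j + c i j) + lam i j) = 0 := by
        intro j
        have := (Finset.sum_eq_zero_iff_of_nonneg (fun j _ => mul_nonneg (h0 j) (h1 j))).mp h2
        exact this j (Finset.mem_univ j)
      funext j
      rw [zvec_eq, ← hprev]
      exact scalar_lcp _ _ (h0 j) (h1 j) (hterm j)
  refine ⟨?_, huniq, ?_⟩
  · intro i hiL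
    refine ⟨fun j => by rw [zvec_eq]; exact le_max_left _ _, fun j => ?_, ?_⟩
    · rw [zvec_eq]
      set v := (θ i).mulVec (prevVec dims x (zvec dims θ c x) i) j + c i j
      rcases le_or_gt v 0 with h | h
      · simp [max_eq_left h]; linarith
      · simp [max_eq_right h.le]
    · apply Finset.sum_eq_zero
      intro j _
      rw [zvec_eq]
      set v := (θ i).mulVec (prevVec dims x (zvec dims θ c x) i) j + c i j
      rcases le_or_gt v 0 with h | h
      · simp [max_eq_left h]
      · simp [max_eq_right h.le]
  · intro lam hlam
    have : prevVec dims x lam L = prevVec dims x (zvec dims θ c x) L := by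
      cases L with
      | zero => exact absurd hL (lt_irrefl 0)
      | succ k => exact huniq lam hlam k (Nat.lt_succ_self k)
    rw [this]
end
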